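/- For all integers r, s ≥ 2, the join of the complete graph K_r with the empty graph on s vertices satisfies c_H(K_r ∨ \overline{K_s}) = ⌊r/2⌋ + 1. -/

import Mathlib

/-- A single move in (reflexive) Cops and Robbers: stay put or move to an adjacent vertex. -/
def CRStep {V : Type*} (G : SimpleGraph V) (u v : V) : Prop := u = v ∨ G.Adj u v

/-- The list of the robber's first `n` positions. -/
def robberHist {V : Type*} (r : ℕ → V) (n : ℕ) : List V := (List.range n).map r

/-- `k` cops have a winning strategy in (perfect-information) Cops and Robbers on `G`.
A cop strategy `F` assigns to every history of robber positions the positions of the `k` cops;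
`F []` is the initial placement of the cops, chosen before the robber picks a start vertex,
and consecutive cop positions must be legal moves.  Given a robber trajectory `r`
(every consecutive pair a legal move), the positions of the cops after their `n`-th move are
`F (robberHist r n)`.  The cops win if at some moment (after a cop move or after a robber
move) some cop occupies the robber's current vertex. -/
def CopsWin {V : Type*} (G : SimpleGraph V) (k : ℕ) : Prop :=
  ∃ F : List V → Fin k → V,
    (∀ l x i, CRStep G (F l i) (F (l ++ [x]) i)) ∧
    ∀ r : ℕ → V, (∀ n, CRStep G (r n) (r (n + 1))) →
      ∃ n, ∃ i, F (robberHist r n) i = r n ∨ F (robberHist r (n + 1)) i = r n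

/-- The cop number of `G`: the least number of cops having a winning strategy. -/
noncomputable def copNumber {V : Type*} (G : SimpleGraph V) : ℕ := sInf {k | CopsWin G k}

open Classical in
/-- The first `n` observations made by hyperopic cops using strategy `F` against the robber
trajectory `r`: after the robber's `n`-th move, the cops (positioned at `F` applied to the
previous observations) see the robber (observation `some (r n)`) unless the robber is
adjacent to every cop (observation `none`). -/
noncomputable def hObsList {V : Type*} (G : SimpleGraph V) {k : ℕ}
    (F : List (Option V) → Fin k → V) (r : ℕ → V) : ℕ → List (Option V)
  | 0 => []
  | n + 1 =>
      hObsList G F r n ++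
        [if ∀ i, G.Adj (F (hObsList G F r n) i) (r n) then none else some (r n)]

/-- `k` cops have a winning strategy in Hyperopic Cops and Robbers on `G`: a strategy
`F`, depending only on the history of observations (the robber being invisible exactly
when adjacent to every cop), which guarantees capture against every robber trajectory. -/
def HCopsWin {V : Type*} (G : SimpleGraph V) (k : ℕ) : Prop :=
  ∃ F : List (Option V) → Fin k → V,
    (∀ l o i, CRStep G (F l i) (F (l ++ [o]) i)) ∧
    ∀ r : ℕ → V, (∀ n, CRStep G (r n) (r (n + 1))) →
      ∃ n, ∃ i, F (hObsList G F r n) i = r n ∨ F (hObsList G F r (n + 1)) i = r n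

/-- The hyperopic cop number of `G`: the least number of cops having a winning strategy
in Hyperopic Cops and Robbers. -/
noncomputable def hyperopicCopNumber {V : Type*} (G : SimpleGraph V) : ℕ :=
  sInf {k | HCopsWin G k}

/-- The join `G ∨ J` of two graphs on disjoint vertex sets: disjoint copies of `G` and `J`
together with all edges between them. -/
def graphJoin {V W : Type*} (G : SimpleGraph V) (J : SimpleGraph W) :
    SimpleGraph (V ⊕ W) where
  Adj x y :=
    match x, y with
    | Sum.inl a, Sum.inl b => G.Adj a b
    | Sum.inr a, Sum.inr b => J.Adj a b
    | _, _ => True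
  symm := by
    constructor
    rintro (a | a) (b | b) h
    · exact G.adj_symm h
    · trivial
    · trivial
    · exact J.adj_symm h
  loopless := by
    constructor
    rintro (a | a) h
    · exact G.irrefl h
    · exact J.irrefl h

/-- Upper-bound strategy for `⌊r/2⌋+1` hyperopic cops on `K_r ∨ K̄_s`. -/
def ubF (r s : ℕ) (hr : 2 ≤ r) (hs : 2 ≤ s) :
    List (Option (Fin r ⊕ Fin s)) → Fin (r / 2 + 1) → Fin r ⊕ Fin s
  | [], i =>
      if i.val = 0 then Sum.inr ⟨0, by omega⟩
      else Sum.inl ⟨i.val - 1, by have h2 := i.2; omega⟩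
  | none :: _, i => Sum.inl ⟨min (r / 2 + i.val) (r - 1), by omega⟩
  | some v :: _, i =>
      if i.val = 0 then Sum.inr ⟨0, by omega⟩
      else if i.val = 1 then v
      else Sum.inl ⟨i.val - 1, by have h2 := i.2; omega⟩

/-- For all integers `r, s ≥ 2`, the join of the complete graph `K_r`
with the empty graph on `s` vertices satisfies `c_H(K_r ∨ K̄_s) = ⌊r/2⌋ + 1`. -/
theorem hyperopicCopNumber_join_complete_empty (r s : ℕ) (hr : 2 ≤ r) (hs : 2 ≤ s) :
    hyperopicCopNumber
        (graphJoin (⊤ : SimpleGraph (Fin r)) (⊥ : SimpleGraph (Fin s))) =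
      r / 2 + 1 := by
  classical
  set G := graphJoin (⊤ : SimpleGraph (Fin r)) (⊥ : SimpleGraph (Fin s)) with hGdef
  have adjLL : ∀ a b : Fin r, a ≠ b → G.Adj (Sum.inl a) (Sum.inl b) := fun a b h => h
  have adjLR : ∀ (a : Fin r) (b : Fin s), G.Adj (Sum.inl a) (Sum.inr b) := fun a b => trivial
  have adjRL : ∀ (b : Fin s) (a : Fin r), G.Adj (Sum.inr b) (Sum.inl a) := fun b a => trivial
  have adjRR : ∀ a b : Fin s, ¬ G.Adj (Sum.inr a) (Sum.inr b) := fun a b h => h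
  have crLL : ∀ a b : Fin r, CRStep G (Sum.inl a) (Sum.inl b) := by
    intro a b
    by_cases h : a = b
    · exact Or.inl (by rw [h])
    · exact Or.inr (adjLL a b h)
  -- Upper bound: ⌊r/2⌋ + 1 cops win.
  have hupper : HCopsWin G (r / 2 + 1) := by
    refine ⟨ubF r s hr hs, ?_, ?_⟩
    · intro l o i
      cases l with
      | nil =>
        rw [List.nil_append]
        cases o with
        | none =>
          simp only [ubF]
          by_cases h0 : i.val = 0
          · rw [if_pos h0]; exact Or.inr (adjRL _ _)
          · rw [if_neg h0]; exact crLL _ _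
        | some v =>
          simp only [ubF]
          by_cases h0 : i.val = 0
          · rw [if_pos h0, if_pos h0]; exact Or.inl rfl
          · rw [if_neg h0, if_neg h0]
            by_cases h1 : i.val = 1
            · rw [if_pos h1]
              cases v with
              | inl a => exact crLL _ _
              | inr b => exact Or.inr (adjLR _ _)
            · rw [if_neg h1]; exact Or.inl rfl
      | cons o' t =>
        show CRStep G (ubF r s hr hs (o' :: t) i) (ubF r s hr hs (o' :: (t ++ [o])) i)
        cases o' with
        | none => exact Or.inl rfl
        | some v => exact Or.inl rfl
    · intro rob hvalid
      have h0 : hObsList G (ubF r s hr hs) rob 0 = [] := rfl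
      have e1 : hObsList G (ubF r s hr hs) rob 1 = hObsList G (ubF r s hr hs) rob 0 ++
          [if (∀ i, G.Adj ((ubF r s hr hs) (hObsList G (ubF r s hr hs) rob 0) i) (rob 0))
            then none else some (rob 0)] := rfl
      rw [h0, List.nil_append] at e1
      rcases hrob0 : rob 0 with u | v
      · -- robber starts on a clique vertex
        by_cases hu : u.val < r / 2
        · refine ⟨0, ⟨u.val + 1, by omega⟩, Or.inl ?_⟩
          rw [h0, hrob0]
          simp only [ubF]
          rw [if_neg (by simp)]
          exact congrArg Sum.inl (Fin.ext (by simp))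
        · have hcond : ∀ i, G.Adj (ubF r s hr hs [] i) (rob 0) := by
            intro i
            simp only [ubF]
            by_cases hi0 : i.val = 0
            · rw [if_pos hi0, hrob0]; exact adjRL _ _
            · rw [if_neg hi0, hrob0]
              refine adjLL _ _ (Fin.ne_of_val_ne ?_)
              have h2 := i.2
              simp only
              omega
          rw [if_pos hcond] at e1
          refine ⟨0, ⟨u.val - r / 2, by have := u.2; omega⟩, Or.inr ?_⟩
          rw [e1, hrob0]
          simp only [ubF]
          exact congrArg Sum.inl (Fin.ext (by have := u.2; simp; omega))
      · -- robber starts on an independent-set vertex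
        by_cases hv : v.val = 0
        · refine ⟨0, ⟨0, by omega⟩, Or.inl ?_⟩
          rw [h0, hrob0]
          simp only [ubF]
          simp only [if_true]
          exact congrArg Sum.inr (Fin.ext (by simpa using hv.symm))
        · have hcond : ¬ (∀ i, G.Adj (ubF r s hr hs [] i) (rob 0)) := by
            intro hall
            have h1 := hall ⟨0, by omega⟩
            rw [hrob0] at h1
            simp only [ubF] at h1
            simp only [if_true] at h1
            exact adjRR _ _ h1
          rw [if_neg hcond] at e1
          refine ⟨0, ⟨1, by omega⟩, Or.inr ?_⟩
          rw [e1]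
          simp only [ubF]
          simp
  -- Lower bound: k ≤ ⌊r/2⌋ cops lose.
  have hlower : ∀ k : ℕ, k ≤ r / 2 → ¬ HCopsWin G k := by
    rintro k hk ⟨F, hF, hwin⟩
    -- if no clique vertex avoids all cop positions at times n, n+1, then all cops
    -- are on the clique at both times
    have hex_or : ∀ n, (¬ ∃ u : Fin r, ∀ i,
          F (List.replicate n none) i ≠ Sum.inl u ∧
          F (List.replicate (n+1) none) i ≠ Sum.inl u) →
        ∀ i, (∃ a, F (List.replicate n none) i = Sum.inl a) ∧
          (∃ a, F (List.replicate (n+1) none) i = Sum.inl a) := by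
      intro n hn
      push_neg at hn
      choose g hg using hn
      set f : Fin r → Fin k × Bool := fun u =>
        (g u, if F (List.replicate n none) (g u) = Sum.inl u then true else false) with hf
      have hinj : Function.Injective f := by
        intro u u' huu
        rw [hf] at huu
        simp only [Prod.mk.injEq] at huu
        obtain ⟨h1, h2⟩ := huu
        by_cases hcu : F (List.replicate n none) (g u) = Sum.inl u
        · rw [if_pos hcu] at h2
          by_cases hcu' : F (List.replicate n none) (g u') = Sum.inl u'
          · rw [← h1] at hcu'
            rw [hcu] at hcu'
            exact Sum.inl.inj hcu'
          · rw [if_neg hcu'] at h2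
            simp at h2
        · rw [if_neg hcu] at h2
          by_cases hcu' : F (List.replicate n none) (g u') = Sum.inl u'
          · rw [if_pos hcu'] at h2
            simp at h2
          · have e1 := hg u hcu
            have e2 := hg u' hcu'
            rw [← h1] at e2
            rw [e1] at e2
            exact Sum.inl.inj e2
      have hcard : Fintype.card (Fin r) ≤ Fintype.card (Fin k × Bool) :=
        Fintype.card_le_of_injective f hinj
      simp [Fintype.card_prod] at hcard
      have hsurj : Function.Surjective f := by
        have hbij := (Fintype.bijective_iff_injective_and_card f).2
          ⟨hinj, by simp [Fintype.card_prod]; omega⟩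
        exact hbij.2
      intro i
      constructor
      · obtain ⟨u, hu⟩ := hsurj (i, true)
        rw [hf] at hu
        simp only [Prod.mk.injEq] at hu
        obtain ⟨h1, h2⟩ := hu
        by_cases hcu : F (List.replicate n none) (g u) = Sum.inl u
        · exact ⟨u, by rw [← h1]; exact hcu⟩
        · rw [if_neg hcu] at h2
          simp at h2
      · obtain ⟨u, hu⟩ := hsurj (i, false)
        rw [hf] at hu
        simp only [Prod.mk.injEq] at hu
        obtain ⟨h1, h2⟩ := hu
        by_cases hcu : F (List.replicate n none) (g u) = Sum.inl u
        · rw [if_pos hcu] at h2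
          simp at h2
        · exact ⟨u, by rw [← h1]; exact hg u hcu⟩
    -- the evading robber
    set rob : ℕ → Fin r ⊕ Fin s := fun n =>
      if h : ∃ u : Fin r, ∀ i,
          F (List.replicate n none) i ≠ Sum.inl u ∧
          F (List.replicate (n+1) none) i ≠ Sum.inl u
      then Sum.inl h.choose
      else Sum.inr ⟨0, by omega⟩ with hrobdef
    have hkey : ∀ n i, (F (List.replicate n none) i ≠ rob n ∧
        F (List.replicate (n+1) none) i ≠ rob n) ∧
        G.Adj (F (List.replicate n none) i) (rob n) := by
      intro n i
      rw [hrobdef]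
      simp only
      by_cases h : ∃ u : Fin r, ∀ i,
          F (List.replicate n none) i ≠ Sum.inl u ∧
          F (List.replicate (n+1) none) i ≠ Sum.inl u
      · rw [dif_pos h]
        have hspec := h.choose_spec i
        refine ⟨⟨hspec.1, hspec.2⟩, ?_⟩
        rcases hci : F (List.replicate n none) i with a | b
        · refine adjLL a _ ?_
          intro e
          exact hspec.1 (by rw [hci, e])
        · exact adjRL b _
      · rw [dif_neg h]
        obtain ⟨⟨a, ha⟩, ⟨a', ha'⟩⟩ := hex_or n h i
        refine ⟨⟨by rw [ha]; simp, by rw [ha']; simp⟩, by rw [ha]; exact adjLR a _⟩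
    have hshape : ∀ n, (∃ a, rob n = Sum.inl a) ∨ rob n = Sum.inr ⟨0, by omega⟩ := by
      intro n
      rw [hrobdef]
      simp only
      by_cases h : ∃ u : Fin r, ∀ i,
          F (List.replicate n none) i ≠ Sum.inl u ∧
          F (List.replicate (n+1) none) i ≠ Sum.inl u
      · rw [dif_pos h]; exact Or.inl ⟨_, rfl⟩
      · rw [dif_neg h]; exact Or.inr rfl
    have hvalid : ∀ n, CRStep G (rob n) (rob (n+1)) := by
      intro n
      rcases hshape n with ⟨a, ha⟩ | ha <;> rcases hshape (n+1) with ⟨b, hb⟩ | hb <;>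
        rw [ha, hb]
      · exact crLL a b
      · exact Or.inr (adjLR a _)
      · exact Or.inr (adjRL _ b)
      · exact Or.inl rfl
    have hobs : ∀ n, hObsList G F rob n = List.replicate n none := by
      intro n
      induction n with
      | zero => rfl
      | succ n ih =>
        have e : hObsList G F rob (n+1) = hObsList G F rob n ++
            [if (∀ i, G.Adj (F (hObsList G F rob n) i) (rob n))
              then none else some (rob n)] := rfl
        rw [e, ih, if_pos (fun i => (hkey n i).2)]
        exact List.replicate_succ'.symm
    obtain ⟨n, i, hcap⟩ := hwin rob hvalid
    rw [hobs n, hobs (n+1)] at hcap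
    rcases hcap with h | h
    · exact (hkey n i).1.1 h
    · exact (hkey n i).1.2 h
  -- conclusion
  show sInf {k | HCopsWin G k} = r / 2 + 1
  refine le_antisymm (Nat.sInf_le hupper) (le_csInf ⟨_, hupper⟩ ?_)
  intro k hkmem
  by_contra hlt
  push_neg at hlt
  exact hlower k (by omega) hkmem
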